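/- Let 𝔽 be a field, let k ≥ 1, let m₁,…,m_k be positive integers, and let T : [m₁] × ⋯ × [m_k] → 𝔽 be a k-tensor. Let 𝒞 be a separating collection of partitions of [k] into two nonempty parts, and let d_max be a common upper bound on the matrix ranks of the 2-flattenings flat_{I,J} T over all partitions {I,J} ∈ 𝒞. Then T has tensor rank at most d_max^{2(k−1)}. -/

import Mathlib

/-- The 2-flattening `flat_{I, [k] \ I} T` of a `k`-tensor `T`: rows are indexed
by the partial indices in `I`, columns by the partial indices outside `I`, and
the entry at a pair of partial indices is `T` evaluated at the combined index. -/
def flattenAt {𝔽 : Type*} {k : ℕ} {m : Fin k → ℕ}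
    (T : (∀ i, Fin (m i)) → 𝔽) (I : Finset (Fin k)) :
    Matrix ((i : {i : Fin k // i ∈ I}) → Fin (m i.1))
      ((j : {j : Fin k // j ∉ I}) → Fin (m j.1)) 𝔽 :=
  Matrix.of fun a b => T fun i => if h : i ∈ I then a ⟨i, h⟩ else b ⟨i, h⟩

section Aux

open Matrix Module Submodule

variable {𝔽 : Type*} [Field 𝔽]

lemma my_rank_submatrix_le {α β α' β' : Type*} [Fintype α] [Fintype β] [Fintype α'] [Fintype β']
    (M : Matrix α β 𝔽) (f : α' → α) (g : β' → β) :
    (M.submatrix f g).rank ≤ M.rank := by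
  classical
  rw [Matrix.rank_eq_finrank_span_cols, Matrix.rank_eq_finrank_span_cols]
  have h1 : Set.range (M.submatrix f g)ᵀ ⊆ (LinearMap.funLeft 𝔽 𝔽 f) '' (Set.range Mᵀ) :=
    fun _ ⟨y, hy⟩ => ⟨Mᵀ (g y), ⟨g y, rfl⟩, hy ▸ rfl⟩
  have h2 : span 𝔽 (Set.range (M.submatrix f g)ᵀ) ≤
      (span 𝔽 (Set.range Mᵀ)).map (LinearMap.funLeft 𝔽 𝔽 f) := by
    rw [Submodule.map_span]
    exact span_mono h1
  exact (Submodule.finrank_mono h2).trans (Submodule.finrank_map_le _ _)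

lemma cur_decomp {α β : Type*} [Fintype α] [Fintype β]
    (M : Matrix α β 𝔽) (d : ℕ) (h : M.rank ≤ d) :
    ∃ (r : ℕ), r ≤ d ∧ ∃ (a : Fin r → α) (c : Fin r → β) (w : Fin r → Fin r → 𝔽),
      ∀ x y, M x y = ∑ p, ∑ q, w p q * M x (c p) * M (a q) y := by
  classical
  obtain ⟨s, hs_sub, hs_span, hs_ind⟩ := exists_linearIndependent 𝔽 (Set.range Mᵀ)
  haveI := hs_ind.setFinite.fintype
  refine ⟨Fintype.card s, ?_, ?_⟩
  · have h1 : finrank 𝔽 (span 𝔽 s) = s.toFinset.card := finrank_span_set_eq_card hs_ind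
    rw [hs_span, show finrank 𝔽 (span 𝔽 (Set.range Mᵀ)) = M.rank from (Matrix.rank_eq_finrank_span_cols M).symm, Set.toFinset_card] at h1
    omega
  set r := Fintype.card s with hr
  set e : Fin r ≃ s := (Fintype.equivFin s).symm with he
  have hcex : ∀ p : Fin r, ∃ y : β, Mᵀ y = (e p : α → 𝔽) := fun p => hs_sub (e p).2
  choose c hc using hcex
  set colfam : Fin r → (α → 𝔽) := fun p => Mᵀ (c p) with hcolfam
  have hind : LinearIndependent 𝔽 colfam := by
    have h2 : LinearIndependent 𝔽 (fun p : Fin r => ((e p) : α → 𝔽)) :=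
      hs_ind.comp e e.injective
    rwa [show (fun p : Fin r => ((e p) : α → 𝔽)) = colfam from funext fun p => (hc p).symm] at h2
  have hrange : Set.range colfam = s := by
    rw [show colfam = Subtype.val ∘ (fun p => e p) from funext fun p => (hc p)]
    rw [Set.range_comp, Set.range_eq_univ.mpr e.surjective, Set.image_univ,
      Subtype.range_coe]
  have hmem : ∀ y : β, Mᵀ y ∈ span 𝔽 (Set.range colfam) := by
    intro y
    rw [hrange, hs_span]
    exact subset_span ⟨y, rfl⟩
  choose E hE using fun y => (mem_span_range_iff_exists_fun 𝔽).mp (hmem y)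
  -- rows
  set rowfam : α → (Fin r → 𝔽) := fun x p => M x (c p) with hrowfam
  have hNspan : span 𝔽 (Set.range rowfam) = ⊤ := by
    set N : Matrix α (Fin r) 𝔽 := Matrix.of fun x p => M x (c p) with hN
    have hNT : Nᵀ = colfam := by
      funext p x; rfl
    have hNrank : N.rank = r := by
      rw [Matrix.rank_eq_finrank_span_cols, show N.col = colfam from hNT, finrank_span_eq_card hind, Fintype.card_fin]
    have hNTrank : Nᵀ.rank = r := by rw [Matrix.rank_transpose]; exact hNrank
    rw [Matrix.rank_eq_finrank_span_cols, show Nᵀ.col = N from rfl] at hNTrank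
    have hrangeN : Set.range N = Set.range rowfam := rfl
    rw [hrangeN] at hNTrank
    apply Submodule.eq_top_of_finrank_eq
    rw [hNTrank, Module.finrank_fintype_fun_eq_card, Fintype.card_fin]
  obtain ⟨t, ht_sub, ht_span, ht_ind⟩ := exists_linearIndependent 𝔽 (Set.range rowfam)
  haveI := ht_ind.setFinite.fintype
  rw [hNspan] at ht_span
  have hcardt : Fintype.card t = r := by
    have h3 : finrank 𝔽 (span 𝔽 t) = t.toFinset.card := finrank_span_set_eq_card ht_ind
    rw [ht_span, finrank_top, Module.finrank_fintype_fun_eq_card, Fintype.card_fin,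
      Set.toFinset_card] at h3
    omega
  set et : Fin r ≃ t := (Fintype.equivFinOfCardEq hcardt).symm with het
  have haex : ∀ q : Fin r, ∃ x : α, rowfam x = (et q : Fin r → 𝔽) := fun q => ht_sub (et q).2
  choose a ha using haex
  set W : Matrix (Fin r) (Fin r) 𝔽 := Matrix.of fun q p => M (a q) (c p) with hWdef
  have hWrows : LinearIndependent 𝔽 (fun q => W q) := by
    have h4 : LinearIndependent 𝔽 (fun q : Fin r => ((et q) : Fin r → 𝔽)) :=
      ht_ind.comp et et.injective
    rwa [show (fun q : Fin r => ((et q) : Fin r → 𝔽)) = fun q => W q from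
      funext fun q => (ha q).symm] at h4
  have hW : IsUnit W := Matrix.linearIndependent_rows_iff_isUnit.mp hWrows
  have hinv : W⁻¹ * W = 1 := Matrix.nonsing_inv_mul W ((Matrix.isUnit_iff_isUnit_det W).mp hW)
  have hcol : ∀ x y, M x y = ∑ p, E y p * M x (c p) := by
    intro x y
    have h5 := congrFun (hE y) x
    simp only [Finset.sum_apply, Pi.smul_apply, smul_eq_mul] at h5
    exact h5.symm
  have hkey : ∀ y, W.mulVec (E y) = fun q => M (a q) y := by
    intro y
    funext q
    simp only [Matrix.mulVec, dotProduct]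
    rw [hcol (a q) y]
    exact Finset.sum_congr rfl fun p _ => mul_comm _ _
  have hEy : ∀ y, E y = W⁻¹.mulVec (fun q => M (a q) y) := by
    intro y
    rw [← hkey y, Matrix.mulVec_mulVec, hinv, Matrix.one_mulVec]
  refine ⟨a, c, fun p q => W⁻¹ p q, fun x y => ?_⟩
  rw [hcol x y]
  refine Finset.sum_congr rfl fun p _ => ?_
  rw [hEy y]
  simp only [Matrix.mulVec, dotProduct, Finset.sum_mul]
  exact Finset.sum_congr rfl fun q _ => by ring

lemma tensor_aux {k : ℕ} {m : Fin k → ℕ}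
    (T : (∀ i, Fin (m i)) → 𝔽)
    (𝒞 : Finset (Finset (Fin k)))
    (hsep : ∀ i j : Fin k, i ≠ j → ∃ I ∈ 𝒞, (i ∈ I ∧ j ∉ I) ∨ (j ∈ I ∧ i ∉ I))
    (dmax : ℕ)
    (hd : ∀ I ∈ 𝒞, (flattenAt T I).rank ≤ dmax) :
    ∀ (n : ℕ) (S : Finset (Fin k)), S.card ≤ n → S.Nonempty → ∀ b : ∀ i, Fin (m i),
      ∃ (nt : ℕ) (v : Fin nt → ∀ i, Fin (m i) → 𝔽),
        nt ≤ dmax ^ (2 * (S.card - 1)) ∧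
        ∀ x, T (S.piecewise x b) = ∑ p, ∏ i ∈ S, v p i (x i) := by
  intro n
  induction n with
  | zero =>
    intro S hcard hne b
    exact absurd (Finset.card_pos.mpr hne) (by omega)
  | succ n ih =>
    intro S hcard hne b
    by_cases h1 : S.card = 1
    · obtain ⟨i₀, rfl⟩ := Finset.card_eq_one.mp h1
      refine ⟨1, fun _ i z => T (Function.update b i z), by simp, fun x => ?_⟩
      rw [Finset.piecewise_singleton]
      simp
    · have h2 : 1 < S.card := by
        have := Finset.card_pos.mpr hne; omega
      obtain ⟨i, hi, j, hj, hij⟩ := Finset.one_lt_card.mp h2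
      obtain ⟨J, hJC, hcase⟩ := hsep i j hij
      set A := S ∩ J with hAdef
      set B := S \ J with hBdef
      have hAne : A.Nonempty := by
        rcases hcase with ⟨h3, h4⟩ | ⟨h3, h4⟩
        exacts [⟨i, Finset.mem_inter.mpr ⟨hi, h3⟩⟩, ⟨j, Finset.mem_inter.mpr ⟨hj, h3⟩⟩]
      have hBne : B.Nonempty := by
        rcases hcase with ⟨h3, h4⟩ | ⟨h3, h4⟩
        exacts [⟨j, Finset.mem_sdiff.mpr ⟨hj, h4⟩⟩, ⟨i, Finset.mem_sdiff.mpr ⟨hi, h4⟩⟩]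
      have hunion : A ∪ B = S := by
        ext z
        simp only [hAdef, hBdef, Finset.mem_union, Finset.mem_inter, Finset.mem_sdiff]
        tauto
      have hdisj : Disjoint A B := (Finset.disjoint_sdiff_inter S J).symm
      have hcards : A.card + B.card = S.card := Finset.card_inter_add_card_sdiff S J
      set f : (∀ i, Fin (m i)) → ((i : {i : Fin k // i ∈ J}) → Fin (m i.1)) :=
        fun x i => if i.1 ∈ S then x i.1 else b i.1 with hfdef
      set g : (∀ i, Fin (m i)) → ((j : {j : Fin k // j ∉ J}) → Fin (m j.1)) :=
        fun x i => if i.1 ∈ S then x i.1 else b i.1 with hgdef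
      set M := (flattenAt T J).submatrix f g with hMdef
      have hMrank : M.rank ≤ dmax := le_trans (my_rank_submatrix_le _ f g) (hd J hJC)
      obtain ⟨r, hr, arow, ccol, w, hw⟩ := cur_decomp M dmax hMrank
      have key1 : ∀ x y, M x y =
          T (fun i => if i ∈ A then x i else if i ∈ B then y i else b i) := by
        intro x y
        have h5 : M x y = T (fun i => if h : i ∈ J then f x ⟨i, h⟩ else g y ⟨i, h⟩) := rfl
        rw [h5]
        refine congrArg T (funext fun i2 => ?_)
        by_cases hiJ : i2 ∈ J <;> by_cases hiS : i2 ∈ S <;>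
          simp [hiJ, hiS, hfdef, hgdef, hAdef, hBdef, Finset.mem_inter, Finset.mem_sdiff]
      have key0 : ∀ x, T (S.piecewise x b) = M x x := by
        intro x
        rw [key1]
        refine congrArg T (funext fun i2 => ?_)
        by_cases hiS : i2 ∈ S <;> by_cases hiJ : i2 ∈ J <;>
          simp [Finset.piecewise, hiS, hiJ, hAdef, hBdef, Finset.mem_inter, Finset.mem_sdiff]
      have key2 : ∀ x p, M x (ccol p) = T (A.piecewise x (B.piecewise (ccol p) b)) := by
        intro x p
        rw [key1]
        refine congrArg T (funext fun i2 => ?_)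
        by_cases hiA : i2 ∈ A <;> by_cases hiB : i2 ∈ B <;>
          simp [Finset.piecewise, hiA, hiB]
      have key3 : ∀ y q, M (arow q) y = T (B.piecewise y (A.piecewise (arow q) b)) := by
        intro y q
        rw [key1]
        refine congrArg T (funext fun i2 => ?_)
        by_cases hiA : i2 ∈ A <;> by_cases hiB : i2 ∈ B
        · exact absurd hiB (Finset.disjoint_left.mp hdisj hiA)
        · simp [Finset.piecewise, hiA, hiB]
        · simp [Finset.piecewise, hiA, hiB]
        · simp [Finset.piecewise, hiA, hiB]
      have hcardA : A.card ≤ n := by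
        have := Finset.card_pos.mpr hBne; omega
      have hcardB : B.card ≤ n := by
        have := Finset.card_pos.mpr hAne; omega
      choose nA vA hnA hvA using fun p : Fin r => ih A hcardA hAne (B.piecewise (ccol p) b)
      choose nB vB hnB hvB using fun q : Fin r => ih B hcardB hBne (A.piecewise (arow q) b)
      obtain ⟨iA, hiA⟩ := hAne
      set v0 : ((pq : Fin r × Fin r) × (Fin (nA pq.1) × Fin (nB pq.2))) → ∀ i, Fin (m i) → 𝔽 := fun z i t =>
        if i = iA then w z.1.1 z.1.2 * vA z.1.1 z.2.1 i t
        else if i ∈ A then vA z.1.1 z.2.1 i t else vB z.1.2 z.2.2 i t with hv0def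
      have prodkey : ∀ (z : (pq : Fin r × Fin r) × (Fin (nA pq.1) × Fin (nB pq.2))) (x : ∀ i, Fin (m i)), ∏ i ∈ S, v0 z i (x i) =
          w z.1.1 z.1.2 * (∏ i ∈ A, vA z.1.1 z.2.1 i (x i)) *
            (∏ i ∈ B, vB z.1.2 z.2.2 i (x i)) := by
        intro z x
        rw [← hunion, Finset.prod_union hdisj]
        have hBprod : ∏ i2 ∈ B, v0 z i2 (x i2) = ∏ i2 ∈ B, vB z.1.2 z.2.2 i2 (x i2) :=
          Finset.prod_congr rfl fun i2 hiB => by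
            have h5 : i2 ∉ A := Finset.disjoint_right.mp hdisj hiB
            have h6 : i2 ≠ iA := fun h => h5 (h ▸ hiA)
            simp [hv0def, h5, h6]
        have hAprod : ∏ i2 ∈ A, v0 z i2 (x i2) =
            w z.1.1 z.1.2 * ∏ i2 ∈ A, vA z.1.1 z.2.1 i2 (x i2) := by
          rw [← Finset.mul_prod_erase A (fun i2 => v0 z i2 (x i2)) hiA,
            ← Finset.mul_prod_erase A (fun i2 => vA z.1.1 z.2.1 i2 (x i2)) hiA]
          have h7 : ∏ i2 ∈ A.erase iA, v0 z i2 (x i2) =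
              ∏ i2 ∈ A.erase iA, vA z.1.1 z.2.1 i2 (x i2) :=
            Finset.prod_congr rfl fun i2 hi2 => by
              have h8 := Finset.ne_of_mem_erase hi2
              have h9 := Finset.mem_of_mem_erase hi2
              simp [hv0def, h8, h9]
          rw [h7]
          have h10 : v0 z iA (x iA) = w z.1.1 z.1.2 * vA z.1.1 z.2.1 iA (x iA) := by
            simp [hv0def]
          rw [h10]
          ring
        rw [hBprod, hAprod]
      have prodsum : ∀ (n1 n2 : ℕ) (cc : 𝔽) (X : Fin n1 → 𝔽) (Y : Fin n2 → 𝔽),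
          cc * (∑ s, X s) * (∑ t, Y t) = ∑ s, ∑ t, cc * X s * Y t := by
        intro n1 n2 cc X Y
        rw [mul_assoc, Finset.sum_mul_sum, Finset.mul_sum]
        exact Finset.sum_congr rfl fun s _ => by
          rw [Finset.mul_sum]
          exact Finset.sum_congr rfl fun t _ => by ring
      have main : ∀ x, T (S.piecewise x b) = ∑ z : ((pq : Fin r × Fin r) × (Fin (nA pq.1) × Fin (nB pq.2))), ∏ i ∈ S, v0 z i (x i) := by
        intro x
        have e1 : (∑ z : ((pq : Fin r × Fin r) × (Fin (nA pq.1) × Fin (nB pq.2))), ∏ i ∈ S, v0 z i (x i)) =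
            ∑ pq : Fin r × Fin r, ∑ st : Fin (nA pq.1) × Fin (nB pq.2),
              w pq.1 pq.2 * (∏ i2 ∈ A, vA pq.1 st.1 i2 (x i2)) *
                (∏ i2 ∈ B, vB pq.2 st.2 i2 (x i2)) := by
          rw [← Finset.univ_sigma_univ, Finset.sum_sigma]
          exact Finset.sum_congr rfl fun pq _ =>
            Finset.sum_congr rfl fun st _ => prodkey ⟨pq, st⟩ x
        rw [key0 x, hw x x, e1, Fintype.sum_prod_type]
        refine Finset.sum_congr rfl fun p _ => Finset.sum_congr rfl fun q _ => ?_
        rw [Fintype.sum_prod_type]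
        have hsA : M x (ccol p) = ∑ s, ∏ i2 ∈ A, vA p s i2 (x i2) := by
          rw [key2 x p]; exact (hvA p) x
        have hsB : M (arow q) x = ∑ t, ∏ i2 ∈ B, vB q t i2 (x i2) := by
          rw [key3 x q]; exact (hvB q) x
        rw [hsA, hsB, prodsum]
      refine ⟨Fintype.card ((pq : Fin r × Fin r) × (Fin (nA pq.1) × Fin (nB pq.2))), fun p => v0 ((Fintype.equivFin ((pq : Fin r × Fin r) × (Fin (nA pq.1) × Fin (nB pq.2)))).symm p), ?_, fun x => ?_⟩
      · have hcardι : Fintype.card ((pq : Fin r × Fin r) × (Fin (nA pq.1) × Fin (nB pq.2))) = ∑ pq : Fin r × Fin r, nA pq.1 * nB pq.2 := by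
          simp [Fintype.card_sigma]
        have hb1 : Fintype.card ((pq : Fin r × Fin r) × (Fin (nA pq.1) × Fin (nB pq.2))) ≤ r * r * (dmax ^ (2 * (A.card - 1)) *
            dmax ^ (2 * (B.card - 1))) := by
          rw [hcardι]
          calc ∑ pq : Fin r × Fin r, nA pq.1 * nB pq.2
              ≤ ∑ _pq : Fin r × Fin r, dmax ^ (2 * (A.card - 1)) * dmax ^ (2 * (B.card - 1)) :=
                Finset.sum_le_sum fun pq _ => Nat.mul_le_mul (hnA pq.1) (hnB pq.2)
            _ = r * r * (dmax ^ (2 * (A.card - 1)) * dmax ^ (2 * (B.card - 1))) := by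
                simp [Finset.sum_const, Finset.card_univ, mul_assoc]
        have hb2 : r * r * (dmax ^ (2 * (A.card - 1)) * dmax ^ (2 * (B.card - 1)))
            ≤ dmax * dmax * (dmax ^ (2 * (A.card - 1)) * dmax ^ (2 * (B.card - 1))) :=
          Nat.mul_le_mul (Nat.mul_le_mul hr hr) le_rfl
        have hb3 : dmax * dmax * (dmax ^ (2 * (A.card - 1)) * dmax ^ (2 * (B.card - 1)))
            = dmax ^ (2 * (S.card - 1)) := by
          have hA1 : 1 ≤ A.card := Finset.card_pos.mpr ⟨iA, hiA⟩
          have hB1 : 1 ≤ B.card := Finset.card_pos.mpr hBne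
          have hexp : 2 * (S.card - 1) = 2 + 2 * (A.card - 1) + 2 * (B.card - 1) := by omega
          rw [hexp]
          ring
        exact le_trans (le_trans hb1 hb2) (le_of_eq hb3)
      · rw [main x]
        exact Fintype.sum_equiv (Fintype.equivFin ((pq : Fin r × Fin r) × (Fin (nA pq.1) × Fin (nB pq.2)))) _ _ (fun z => by simp)

end Aux

/-- If `𝒞` is a separating collection of partitions of `[k]` into
two nonempty parts (each partition represented by `I` and its complement), and the
rank of each 2-flattening `flat_{I, Iᶜ} T` for `I ∈ 𝒞` is at most `dmax`, then `T`
can be written as a sum of `dmax ^ (2(k-1))` pure tensors. -/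
theorem stmt_2 (𝔽 : Type*) [Field 𝔽] (k : ℕ) (hk : 1 ≤ k)
    (m : Fin k → ℕ) (hm : ∀ i, 0 < m i)
    (T : (∀ i, Fin (m i)) → 𝔽)
    (𝒞 : Finset (Finset (Fin k)))
    (hparts : ∀ I ∈ 𝒞, I.Nonempty ∧ Iᶜ.Nonempty)
    (hsep : ∀ i j : Fin k, i ≠ j →
      ∃ I ∈ 𝒞, (i ∈ I ∧ j ∉ I) ∨ (j ∈ I ∧ i ∉ I))
    (dmax : ℕ)
    (hd : ∀ I ∈ 𝒞, (flattenAt T I).rank ≤ dmax) :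
    ∃ v : Fin (dmax ^ (2 * (k - 1))) → ∀ i, Fin (m i) → 𝔽,
      ∀ x, T x = ∑ p, ∏ i, v p i (x i) := by
  classical
  haveI : Nonempty (Fin k) := ⟨⟨0, hk⟩⟩
  set b : ∀ i, Fin (m i) := fun i => ⟨0, hm i⟩ with hbdef
  obtain ⟨nt, v, hnt, hv⟩ := tensor_aux T 𝒞 hsep dmax hd k Finset.univ
    (by simp) Finset.univ_nonempty b
  rw [Finset.card_univ, Fintype.card_fin] at hnt
  set N := dmax ^ (2 * (k - 1)) with hNdef
  refine ⟨fun p i => if h : (p : ℕ) < nt then v ⟨p, h⟩ i else 0, fun x => ?_⟩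
  have hx : T x = ∑ p, ∏ i, v p i (x i) := by
    have := hv x
    rwa [Finset.piecewise_univ] at this
  rw [hx]
  set F : ℕ → 𝔽 := fun p => if h : p < nt then ∏ i, v ⟨p, h⟩ i (x i) else 0 with hF
  have h1 : ∑ p : Fin nt, ∏ i, v p i (x i) = ∑ p ∈ Finset.range nt, F p := by
    calc ∑ p : Fin nt, ∏ i, v p i (x i) = ∑ p : Fin nt, F p.1 :=
          Finset.sum_congr rfl fun p _ => by simp [hF, p.is_lt]
      _ = ∑ p ∈ Finset.range nt, F p := Fin.sum_univ_eq_sum_range F nt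
  have h2 : ∑ p ∈ Finset.range nt, F p = ∑ p ∈ Finset.range N, F p := by
    apply Finset.sum_subset (Finset.range_subset_range.mpr hnt)
    intro p _ hp
    simp only [Finset.mem_range] at hp
    simp [hF, hp]
  have h3 : ∑ p ∈ Finset.range N, F p =
      ∑ p : Fin N, ∏ i, (if h : (p : ℕ) < nt then v ⟨p, h⟩ i else 0) (x i) := by
    rw [← Fin.sum_univ_eq_sum_range F N]
    refine Finset.sum_congr rfl fun p _ => ?_
    by_cases h : (p : ℕ) < nt
    · simp [hF, h]
    · simp only [hF, dif_neg h]
      symm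
      apply Finset.prod_eq_zero (Finset.mem_univ (Classical.arbitrary (Fin k)))
      simp [h]
  rw [h1, h2, h3]
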